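/- Shift invariance of generalized Gončarov bases: if W = (z_i + ξ)_{i≥0} is the translation of the grid Z = (z_i) by ξ ∈ K, and (t_n), (h_n) are the generalized Gončarov bases for (𝔡, Z) and (𝔡, W) respectively, then h_n(x+ξ) = t_n(x) for all n. -/
import Mathlib


open Polynomial

/-- The shift operator `E_a : K[x] → K[x]`, `f(x) ↦ f(x+a)`, as a linear endomorphism. -/
noncomputable def shiftOp (K : Type*) [Field K] (a : K) : Module.End K (Polynomial K) :=
  (aeval (X + C a) : Polynomial K →ₐ[K] Polynomial K).toLinearMap

/-- A linear operator on `K[x]` is shift-invariant if it commutes with every shift `E_a`. -/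
def IsShiftInvariant {K : Type*} [Field K] (s : Module.End K (Polynomial K)) : Prop :=
  ∀ a : K, s ∘ₗ shiftOp K a = shiftOp K a ∘ₗ s

/-- A delta operator: shift-invariant and sends `X` to a nonzero constant. -/
def IsDeltaOperator {K : Type*} [Field K] (d : Module.End K (Polynomial K)) : Prop :=
  IsShiftInvariant d ∧ ∃ c : K, c ≠ 0 ∧ d X = C c

/-- The sequence of basic polynomials of a delta operator `d`. -/
def IsBasicSequence {K : Type*} [Field K] (d : Module.End K (Polynomial K))
    (p : ℕ → Polynomial K) : Prop :=
  p 0 = 1 ∧ (∀ n, 1 ≤ n → (p n).eval 0 = 0) ∧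
    ∀ n, 1 ≤ n → d (p n) = (n : K) • p (n - 1)

/-- The generalized Gončarov basis associated with the pair `(d, z)`:
`deg t_n = n` and `ε_{z_i}(d^i t_n) = n! δ_{i,n}`. -/
def IsGoncarovBasis {K : Type*} [Field K] (d : Module.End K (Polynomial K))
    (z : ℕ → K) (t : ℕ → Polynomial K) : Prop :=
  ∀ n, (t n).natDegree = n ∧
    ∀ i, ((d ^ i) (t n)).eval (z i) = if i = n then (n.factorial : K) else 0

section Aux

open Finset

set_option linter.unusedSectionVars false

variable {K : Type*} [Field K] (d : Module.End K (Polynomial K))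

lemma shiftOp_apply (a : K) (f : Polynomial K) : shiftOp K a f = f.comp (X + C a) := by
  simp [shiftOp, comp, aeval_def, Polynomial.algebraMap_eq]

lemma shiftOp_eval (a : K) (f : Polynomial K) (x : K) :
    (shiftOp K a f).eval x = f.eval (x + a) := by
  simp [shiftOp_apply, eval_comp]

lemma d_shift (hd : IsDeltaOperator d) (a : K) (f : Polynomial K) :
    d (shiftOp K a f) = shiftOp K a (d f) := by
  have := congrArg (fun s => s f) (hd.1 a)
  simpa using this

lemma d_C (hd : IsDeltaOperator d) (a : K) : d (C a) = 0 := by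
  obtain ⟨c, hc, hdX⟩ := hd.2
  have h1 : d (shiftOp K a X) = shiftOp K a (d X) := d_shift d hd a X
  have h2 : shiftOp K a X = X + C a := by simp [shiftOp_apply]
  have h3 : shiftOp K a (C c) = C c := by simp [shiftOp_apply]
  rw [h2, hdX, h3, map_add, hdX] at h1
  simpa using h1

lemma eval_dXpow (hd : IsDeltaOperator d) (n : ℕ) (a : K) :
    (d (X^n)).eval a = ∑ k ∈ range (n+1), ((n.choose k : K) * (d (X^k)).eval 0) * a^(n-k) := by
  have h1 : d (shiftOp K a (X^n)) = shiftOp K a (d (X^n)) := d_shift d hd a _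
  have h2 : shiftOp K a (X^n) = ∑ k ∈ range (n+1), (a^(n-k) * (n.choose k : K)) • X^k := by
    rw [shiftOp_apply]
    simp only [pow_comp, X_comp, add_pow]
    apply Finset.sum_congr rfl
    intro k hk
    rw [smul_eq_C_mul, map_mul, map_pow]
    push_cast [Polynomial.C_eq_natCast]
    ring
  have h3 := congrArg (fun p => Polynomial.eval (0:K) p) h1
  simp only [h2, map_sum, map_smul, shiftOp_eval, eval_finset_sum, eval_smul, smul_eq_mul,
    zero_add] at h3
  rw [← h3]
  apply Finset.sum_congr rfl
  intro k hk
  ring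

variable [CharZero K]

lemma dXpow_eq (hd : IsDeltaOperator d) (n : ℕ) :
    d (X^n) = ∑ k ∈ range (n+1), C ((n.choose k : K) * (d (X^k)).eval 0) * X^(n-k) := by
  apply Polynomial.funext
  intro a
  rw [eval_dXpow d hd]
  simp [eval_finset_sum]

lemma d_one (hd : IsDeltaOperator d) : d 1 = 0 := by
  simpa using d_C d hd 1

lemma coeff_dXpow_ge (hd : IsDeltaOperator d) (n j : ℕ) (hj : n ≤ j) :
    (d (X^n)).coeff j = 0 := by
  rw [dXpow_eq d hd]
  rw [finset_sum_coeff]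
  apply Finset.sum_eq_zero
  intro k hk
  rw [coeff_C_mul, coeff_X_pow]
  have hk' : k < n + 1 := mem_range.mp hk
  rcases eq_or_ne j (n - k) with hkj | hkj
  · have : k = 0 := by omega
    rw [this]
    simp [d_one d hd]
  · rw [if_neg hkj, mul_zero]

lemma natDegree_dXpow_le (hd : IsDeltaOperator d) (n : ℕ) :
    (d (X^n)).natDegree ≤ n - 1 := by
  rw [natDegree_le_iff_coeff_eq_zero]
  intro N hN
  exact coeff_dXpow_ge d hd n N (by omega)

lemma coeff_dXpow_pred (hd : IsDeltaOperator d) (n : ℕ) (hn : 1 ≤ n) :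
    (d (X^n)).coeff (n-1) = (n : K) * (d X).eval 0 := by
  rw [dXpow_eq d hd, finset_sum_coeff]
  rw [Finset.sum_eq_single 1]
  · rw [coeff_C_mul, coeff_X_pow, if_pos rfl]
    simp [Nat.choose_one_right]
  · intro k hk hk1
    have hk' : k < n + 1 := mem_range.mp hk
    rw [coeff_C_mul, coeff_X_pow, if_neg (by omega)]
    ring
  · intro h1
    exact absurd (mem_range.mpr (by omega)) h1

lemma coeff_d (f : Polynomial K) (j : ℕ) :
    (d f).coeff j = ∑ k ∈ range (f.natDegree+1), f.coeff k * (d (X^k)).coeff j := by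
  conv_lhs => rw [f.as_sum_range' (f.natDegree+1) (lt_add_one _)]
  simp only [← smul_X_eq_monomial, map_sum, map_smul, finset_sum_coeff, coeff_smul, smul_eq_mul]

lemma natDegree_d_le (hd : IsDeltaOperator d) (f : Polynomial K) :
    (d f).natDegree ≤ f.natDegree - 1 := by
  rw [natDegree_le_iff_coeff_eq_zero]
  intro N hN
  rw [coeff_d]
  apply Finset.sum_eq_zero
  intro k hk
  have hk' : k < f.natDegree + 1 := mem_range.mp hk
  have h1 : (d (X^k)).natDegree < N :=
    lt_of_le_of_lt (natDegree_dXpow_le d hd k) (by omega)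
  rw [coeff_eq_zero_of_natDegree_lt h1, mul_zero]

lemma d_ne_zero (hd : IsDeltaOperator d) (f : Polynomial K) (hf : 1 ≤ f.natDegree) :
    d f ≠ 0 := by
  obtain ⟨c, hc, hdX⟩ := hd.2
  intro h0
  have h1 : (d f).coeff (f.natDegree - 1) = 0 := by rw [h0]; simp
  rw [coeff_d, Finset.sum_eq_single f.natDegree] at h1
  · rw [coeff_dXpow_pred d hd _ hf, hdX] at h1
    have hm : (f.natDegree : K) ≠ 0 := Nat.cast_ne_zero.mpr (by omega)
    have hf0 : f ≠ 0 := fun h => by simp [h] at hf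
    have hlc : f.coeff f.natDegree ≠ 0 := mt leadingCoeff_eq_zero.mp hf0
    simp only [eval_C] at h1
    exact (mul_ne_zero hlc (mul_ne_zero hm hc)) h1
  · intro k hk hkm
    have hk' : k < f.natDegree + 1 := mem_range.mp hk
    rcases Nat.eq_zero_or_pos k with rfl | hk1
    · simp [d_one d hd]
    · have h1 : (d (X^k)).natDegree < f.natDegree - 1 :=
        lt_of_le_of_lt (natDegree_dXpow_le d hd k) (by omega)
      rw [coeff_eq_zero_of_natDegree_lt h1, mul_zero]
  · intro h1
    exact absurd (mem_range.mpr (by omega)) h1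

lemma const_eval_zero (f : Polynomial K) (hdeg : f.natDegree = 0) (w : K)
    (hev : f.eval w = 0) : f = 0 := by
  rw [eq_C_of_natDegree_eq_zero hdeg] at hev ⊢
  rw [eval_C] at hev
  rw [hev, map_zero]

lemma goncarov_uniq (hd : IsDeltaOperator d) :
    ∀ n (z : ℕ → K) (f : Polynomial K), f.natDegree ≤ n →
      (∀ i, i ≤ n → ((d ^ i) f).eval (z i) = 0) → f = 0 := by
  intro n
  induction n with
  | zero =>
    intro z f hdeg hev
    have h0 := hev 0 le_rfl
    simp only [pow_zero, Module.End.one_apply] at h0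
    exact const_eval_zero f (Nat.le_zero.mp hdeg) (z 0) h0
  | succ n ih =>
    intro z f hdeg hev
    have hg : d f = 0 := by
      apply ih (fun i => z (i+1)) (d f)
      · have := natDegree_d_le d hd f
        omega
      · intro i hi
        have h0 := hev (i+1) (by omega)
        rw [pow_succ, Module.End.mul_apply] at h0
        exact h0
    have hdeg0 : f.natDegree = 0 := by
      by_contra hne
      exact d_ne_zero d hd f (by omega) hg
    have h0 := hev 0 (by omega)
    simp only [pow_zero, Module.End.one_apply] at h0
    exact const_eval_zero f hdeg0 (z 0) h0

end Aux

theorem stmt9 {K : Type*} [Field K] [CharZero K] (d : Module.End K (Polynomial K))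
    (hd : IsDeltaOperator d) (z : ℕ → K) (ξ : K)
    (t h : ℕ → Polynomial K)
    (ht : IsGoncarovBasis d z t)
    (hh : IsGoncarovBasis d (fun i => z i + ξ) h) :
    ∀ n, (h n).comp (X + C ξ) = t n := by
  intro n
  have hcomm : ∀ (i : ℕ) (f : Polynomial K),
      (d ^ i) (shiftOp K ξ f) = shiftOp K ξ ((d ^ i) f) := by
    intro i
    induction i with
    | zero => intro f; simp
    | succ i ih =>
      intro f
      rw [pow_succ, Module.End.mul_apply, d_shift d hd, ih]
      congr 1
  have hp : (h n).comp (X + C ξ) = shiftOp K ξ (h n) := (shiftOp_apply ξ (h n)).symm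
  have hdegp : ((h n).comp (X + C ξ)).natDegree = n := by
    rw [natDegree_comp, natDegree_X_add_C, mul_one, (hh n).1]
  have key : (h n).comp (X + C ξ) - t n = 0 := by
    apply goncarov_uniq d hd n z
    · apply le_trans (natDegree_sub_le _ _)
      rw [hdegp, (ht n).1, max_self]
    · intro i hi
      rw [map_sub, eval_sub, hp, hcomm, shiftOp_eval, (hh n).2 i, (ht n).2 i, sub_self]
  exact sub_eq_zero.mp key
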